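/- Let α ∈ (0, 1/2] and let y ∈ ℝ² satisfy y₁ ≥ 1 and 2|y₂| ≤ y₁^α. Set a = y₁ − |y₂|^{1/α} and b = y₁^α − |y₂|. Then a > 0, b > 0, and ab/√(a² + b²) ≥ ‖y‖^α / 8. -/
import Mathlib


lemma parabola_corner_aux (a b u : ℝ) (hu : 0 < u) (ha : 3 / 4 * u ≤ a) (hb : u / 2 ≤ b) :
    Real.sqrt 2 * u / 8 ≤ a * b / Real.sqrt (a ^ 2 + b ^ 2) := by
  have ha0 : 0 < a := by linarith
  have hb0 : 0 < b := by linarith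
  have hs2 : Real.sqrt 2 ≤ 3 / 2 := by
    nlinarith [Real.sq_sqrt (by norm_num : (0:ℝ) ≤ 2), Real.sqrt_nonneg 2]
  have hsnn : 0 ≤ Real.sqrt 2 := Real.sqrt_nonneg 2
  have hs_pos : 0 < Real.sqrt (a ^ 2 + b ^ 2) := Real.sqrt_pos.2 (by positivity)
  have hs_le : Real.sqrt (a ^ 2 + b ^ 2) ≤ a + b := by
    have h1 : a ^ 2 + b ^ 2 ≤ (a + b) ^ 2 := by nlinarith
    calc Real.sqrt (a ^ 2 + b ^ 2) ≤ Real.sqrt ((a + b) ^ 2) := Real.sqrt_le_sqrt h1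
      _ = a + b := Real.sqrt_sq (by positivity)
  have h1 : Real.sqrt 2 * u / 8 ≤ a * b / (a + b) := by
    rw [div_le_div_iff₀ (by norm_num) (by linarith)]
    nlinarith [mul_nonneg (show (0:ℝ) ≤ 3/2 - Real.sqrt 2 by linarith)
        (mul_nonneg hu.le (by linarith : (0:ℝ) ≤ a + b)),
      mul_nonneg (show (0:ℝ) ≤ a - 3/4*u by linarith) hb0.le,
      mul_nonneg (show (0:ℝ) ≤ b - u/2 by linarith) ha0.le,
      mul_pos ha0 hb0]
  refine h1.trans ?_
  gcongr

set_option maxHeartbeats 1000000 in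
theorem parabola_corner_estimate (α : ℝ) (hα : 0 < α) (hα' : α ≤ 1 / 2)
    (y : EuclideanSpace ℝ (Fin 2)) (hy1 : 1 ≤ y 0) (hy2 : 2 * |y 1| ≤ (y 0) ^ α) :
    0 < y 0 - |y 1| ^ (1 / α) ∧ 0 < (y 0) ^ α - |y 1| ∧
      ‖y‖ ^ α / 8 ≤ (y 0 - |y 1| ^ (1 / α)) * ((y 0) ^ α - |y 1|) /
        Real.sqrt ((y 0 - |y 1| ^ (1 / α)) ^ 2 + ((y 0) ^ α - |y 1|) ^ 2) := by
  set x := y 0 with hxdef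
  set t := |y 1| with htdef
  have ht0 : 0 ≤ t := abs_nonneg _
  have hx0 : (0:ℝ) < x := lt_of_lt_of_le one_pos hy1
  have hxα1 : (1:ℝ) ≤ x ^ α := Real.one_le_rpow hy1 hα.le
  have hxαpos : (0:ℝ) < x ^ α := lt_of_lt_of_le one_pos hxα1
  have htb : t ≤ x ^ α / 2 := by linarith
  have hb : 0 < x ^ α - t := by linarith
  have h2α : (2:ℝ) ≤ 1 / α := by
    rw [le_div_iff₀ hα]; linarith
  have h4 : (4:ℝ) ≤ (2:ℝ) ^ (1/α) := by
    have : (2:ℝ) ^ (2:ℝ) ≤ (2:ℝ) ^ (1/α) :=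
      Real.rpow_le_rpow_of_exponent_le one_le_two h2α
    have h22 : (2:ℝ) ^ (2:ℝ) = 4 := by
      rw [show (2:ℝ) = ((2:ℕ):ℝ) from by norm_num, Real.rpow_natCast]; norm_num
    linarith
  have hta : t ^ (1/α) ≤ x / 4 := by
    have h1 : t ^ (1/α) ≤ (x ^ α / 2) ^ (1/α) :=
      Real.rpow_le_rpow ht0 htb (by positivity)
    have h2 : (x ^ α / 2) ^ (1/α) = x / (2:ℝ) ^ (1/α) := by
      rw [Real.div_rpow (by positivity) (by norm_num), ← Real.rpow_mul hx0.le,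
        mul_one_div_cancel hα.ne', Real.rpow_one]
    have h3 : x / (2:ℝ) ^ (1/α) ≤ x / 4 := by
      apply div_le_div_of_nonneg_left hx0.le (by norm_num) h4
    linarith
  have hxαx : x ^ α ≤ x := by
    have := Real.rpow_le_rpow_of_exponent_le hy1 (show α ≤ 1 by linarith)
    rwa [Real.rpow_one] at this
  have ha : 3 / 4 * x ^ α ≤ x - t ^ (1/α) := by linarith
  have ha0 : 0 < x - t ^ (1/α) := by linarith
  refine ⟨ha0, hb, ?_⟩
  have hny : ‖y‖ ≤ 2 * x := by
    have hnorm : ‖y‖ = Real.sqrt (x ^ 2 + t ^ 2) := by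
      rw [EuclideanSpace.norm_eq]
      congr 1
      rw [Fin.sum_univ_two]
      simp [Real.norm_eq_abs, sq_abs, htdef, hxdef]
    rw [hnorm]
    have htx : t ≤ x := by nlinarith
    have h5 : x ^ 2 + t ^ 2 ≤ (2 * x) ^ 2 := by nlinarith
    calc Real.sqrt (x ^ 2 + t ^ 2) ≤ Real.sqrt ((2*x)^2) := Real.sqrt_le_sqrt h5
      _ = 2 * x := Real.sqrt_sq (by positivity)
  have hnα : ‖y‖ ^ α ≤ Real.sqrt 2 * x ^ α := by
    have h1 : ‖y‖ ^ α ≤ (2 * x) ^ α := Real.rpow_le_rpow (norm_nonneg y) hny hα.le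
    have h2 : (2 * x) ^ α = (2:ℝ) ^ α * x ^ α := Real.mul_rpow (by norm_num) hx0.le
    have h3 : (2:ℝ) ^ α ≤ (2:ℝ) ^ ((1:ℝ)/2) :=
      Real.rpow_le_rpow_of_exponent_le one_le_two (by linarith)
    have h4' : (2:ℝ) ^ ((1:ℝ)/2) = Real.sqrt 2 := (Real.sqrt_eq_rpow 2).symm
    have hxn : 0 ≤ x ^ α := hxαpos.le
    nlinarith
  have haux := parabola_corner_aux (x - t ^ (1/α)) (x ^ α - t) (x ^ α) hxαpos
    (by linarith) (by linarith)
  calc ‖y‖ ^ α / 8 ≤ Real.sqrt 2 * x ^ α / 8 := by linarith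
    _ ≤ _ := haux
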